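/- Let a_1,…,a_t and c_1,…,c_t be integers with each a_i ≥ 1 and gcd(a_i, c_i) = 1 for all i, and suppose the a_i are pairwise coprime. Let M be the t×t integer matrix whose i-th row for i < t has a_i in position i, −a_{i+1} in position i+1, and zeros elsewhere, and whose last row is (c_1, c_2, …, c_t). Then the Smith normal form of M is diag(1, 1, …, 1, D) where D = |(∏_{j=1}^t a_j)·(∑_{l=1}^t c_l/a_l)|, i.e., D = |∑_{l=1}^t c_l ∏_{j≠l} a_j|. -/

import Mathlib

open Matrix Finset


def Eqv {n : ℕ} (M N : Matrix (Fin n) (Fin n) ℤ) : Prop :=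
  ∃ P Q : Matrix (Fin n) (Fin n) ℤ, IsUnit P.det ∧ IsUnit Q.det ∧ P * M * Q = N

lemma Eqv.trans {n : ℕ} {A B C : Matrix (Fin n) (Fin n) ℤ} (h1 : Eqv A B) (h2 : Eqv B C) :
    Eqv A C := by
  obtain ⟨P1, Q1, hP1, hQ1, h1⟩ := h1
  obtain ⟨P2, Q2, hP2, hQ2, h2⟩ := h2
  refine ⟨P2 * P1, Q1 * Q2, ?_, ?_, ?_⟩
  · rw [Matrix.det_mul]; exact hP2.mul hP1
  · rw [Matrix.det_mul]; exact hQ1.mul hQ2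
  · rw [← h2, ← h1]; noncomm_ring

def lift1 {n : ℕ} (A : Matrix (Fin n) (Fin n) ℤ) : Matrix (Fin (n+1)) (Fin (n+1)) ℤ :=
  Matrix.of fun i j =>
    Fin.cases (Fin.cases 1 (fun _ => (0:ℤ)) j) (fun i' => Fin.cases 0 (fun j' => A i' j') j) i

@[simp] lemma lift1_zero_zero {n : ℕ} (A : Matrix (Fin n) (Fin n) ℤ) : lift1 A 0 0 = 1 := rfl
@[simp] lemma lift1_zero_succ {n : ℕ} (A : Matrix (Fin n) (Fin n) ℤ) (j : Fin n) :
    lift1 A 0 j.succ = 0 := by simp [lift1]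
@[simp] lemma lift1_succ_zero {n : ℕ} (A : Matrix (Fin n) (Fin n) ℤ) (i : Fin n) :
    lift1 A i.succ 0 = 0 := by simp [lift1]
@[simp] lemma lift1_succ_succ {n : ℕ} (A : Matrix (Fin n) (Fin n) ℤ) (i j : Fin n) :
    lift1 A i.succ j.succ = A i j := by simp [lift1]

lemma lift1_mul {n : ℕ} (A B : Matrix (Fin n) (Fin n) ℤ) :
    lift1 A * lift1 B = lift1 (A * B) := by
  ext i j
  rw [Matrix.mul_apply]
  rcases Fin.eq_zero_or_eq_succ i with rfl | ⟨i', rfl⟩ <;>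
    rcases Fin.eq_zero_or_eq_succ j with rfl | ⟨j', rfl⟩ <;>
    simp [Fin.sum_univ_succ, Matrix.mul_apply]

lemma det_lift1 {n : ℕ} (A : Matrix (Fin n) (Fin n) ℤ) : (lift1 A).det = A.det := by
  rw [Matrix.det_succ_column_zero, Fin.sum_univ_succ]
  have h1 : (lift1 A).submatrix Fin.succ Fin.succ = A := by
    ext i j; simp
  simp [Fin.succAbove_zero, h1]

lemma Eqv.lift1 {n : ℕ} {A B : Matrix (Fin n) (Fin n) ℤ} (h : Eqv A B) :
    Eqv (lift1 A) (lift1 B) := by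
  obtain ⟨P, Q, hP, hQ, h⟩ := h
  exact ⟨_root_.lift1 P, _root_.lift1 Q, by rwa [det_lift1], by rwa [det_lift1],
    by rw [lift1_mul, lift1_mul, h]⟩

def Mmat {n : ℕ} (a c : Fin (n+1) → ℤ) : Matrix (Fin (n+1)) (Fin (n+1)) ℤ :=
  Matrix.of fun i j =>
    if (i : ℕ) = n then c j
    else if j = i then a i
    else if (j : ℕ) = (i : ℕ) + 1 then -(a j) else 0

def Dmat {n : ℕ} (a c : Fin (n+1) → ℤ) : Matrix (Fin (n+1)) (Fin (n+1)) ℤ :=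
  Matrix.diagonal (fun i =>
    if (i : ℕ) = n then |∑ l, c l * ∏ j ∈ Finset.univ.erase l, a j| else 1)

lemma prod_erase_eq {m : ℕ} (f : Fin m → ℤ) (l : Fin m) :
    ∏ j ∈ Finset.univ.erase l, f j = ∏ j, (if j = l then 1 else f j) := by
  have h2 : ∏ j : Fin m, (if j = l then (1:ℤ) else f j)
      = ∏ j ∈ Finset.univ.erase l, (if j = l then (1:ℤ) else f j) :=
    (Finset.prod_erase _ (by simp)).symm
  rw [h2]
  exact (Finset.prod_congr rfl fun j hj => by simp [Finset.ne_of_mem_erase hj]).symm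

lemma sum_id {n : ℕ} (a c : Fin (n+2) → ℤ)
    (a' c' : Fin (n+1) → ℤ)
    (ha' : a' = fun i => if i = 0 then a 0 * a 1 else a i.succ)
    (hc' : c' = fun i => if i = 0 then a 1 * c 0 + a 0 * c 1 else c i.succ) :
    ∑ l, c' l * ∏ j ∈ Finset.univ.erase l, a' j
      = ∑ l, c l * ∏ j ∈ Finset.univ.erase l, a j := by
  subst ha' hc'
  simp only [prod_erase_eq]
  rw [Fin.sum_univ_succ (n := n+1), Fin.sum_univ_succ (n := n), Fin.sum_univ_succ (n := n)]
  simp only [Fin.succ_zero_eq_one]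
  have h01 : ¬((0:Fin (n+2)) = 1) := by simp [Fin.ext_iff]
  have hss1 : ∀ k : Fin n, ¬((k.succ.succ : Fin (n+2)) = 1) := fun k => by
    rw [← Fin.succ_zero_eq_one, Fin.succ_inj]; exact Fin.succ_ne_zero k
  have key : ∀ l : Fin n,
      (if l.succ = 0 then a 1 * c 0 + a 0 * c 1 else c l.succ.succ) *
        ∏ j : Fin (n+1), (if j = l.succ then 1 else if j = 0 then a 0 * a 1 else a j.succ)
      = c l.succ.succ * ∏ j : Fin (n+2), (if j = l.succ.succ then 1 else a j) := by
    intro l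
    have hz : ¬((0 : Fin (n+1)) = l.succ) := fun h => Fin.succ_ne_zero l h.symm
    have hz2 : ¬((0 : Fin (n+2)) = l.succ.succ) := fun h => Fin.succ_ne_zero _ h.symm
    have h1 : ¬((1 : Fin (n+2)) = l.succ.succ) := by
      rw [← Fin.succ_zero_eq_one, Fin.succ_inj]
      exact fun h => Fin.succ_ne_zero l h.symm
    rw [Fin.prod_univ_succ (n := n), Fin.prod_univ_succ (n := n+1), Fin.prod_univ_succ (n := n)]
    simp only [Fin.succ_zero_eq_one, if_neg hz, if_neg hz2, if_neg h1, if_pos rfl,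
      Fin.succ_inj, Fin.succ_ne_zero, if_neg (Fin.succ_ne_zero l), ite_true, ite_false,
      if_true, if_false]
    erw [if_neg h1]
    ring
  rw [Finset.sum_congr rfl (fun l _ => key l)]
  have P0 : ∏ j : Fin (n+2), (if j = 0 then (1:ℤ) else a j)
      = a 1 * ∏ k : Fin n, a k.succ.succ := by
    rw [Fin.prod_univ_succ, Fin.prod_univ_succ]
    simp only [Fin.succ_zero_eq_one, if_pos rfl, one_mul, Fin.succ_ne_zero,
      ite_true, ite_false, if_true, if_false,
      if_neg (show ¬((1:Fin (n+2)) = 0) from fun h => h01 h.symm)]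
    simp [Fin.ext_iff]
  have P1 : ∏ j : Fin (n+2), (if j = 1 then (1:ℤ) else a j)
      = a 0 * ∏ k : Fin n, a k.succ.succ := by
    rw [Fin.prod_univ_succ, Fin.prod_univ_succ]
    rw [if_neg h01]
    simp only [Fin.succ_zero_eq_one, if_pos rfl, one_mul, ite_true, if_true]
    rw [Finset.prod_congr rfl fun k _ => if_neg (hss1 k)]
  have P0' : ∏ j : Fin (n+1), (if j = 0 then (1:ℤ) else if j = 0 then a 0 * a 1 else a j.succ)
      = ∏ k : Fin n, a k.succ.succ := by
    rw [Fin.prod_univ_succ]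
    simp only [if_pos rfl, one_mul, Fin.succ_ne_zero, ite_true, ite_false, if_true, if_false]
  rw [P0, P0']; erw [P1]
  simp only [if_pos rfl, ite_true, if_true]
  ring

def Qmat {n : ℕ} (u v p q : ℤ) : Matrix (Fin (n+2)) (Fin (n+2)) ℤ :=
  Matrix.of fun k j =>
    if j = 0 then (if k = 0 then u else if k = 1 then -v else 0)
    else if j = 1 then (if k = 0 then q else if k = 1 then p else 0)
    else if k = j then 1 else 0

def Rmat {n : ℕ} (u v p q : ℤ) : Matrix (Fin (n+2)) (Fin (n+2)) ℤ :=
  Matrix.of fun k j =>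
    if k = 0 then (if j = 0 then p else if j = 1 then -q else 0)
    else if k = 1 then (if j = 0 then v else if j = 1 then u else 0)
    else if k = j then 1 else 0

lemma Qmat_mul_Rmat {n : ℕ} (u v p q : ℤ) (h : u * p + v * q = 1) :
    (Qmat (n := n) u v p q) * Rmat u v p q = 1 := by
  have h01 : ¬((0:Fin (n+2)) = 1) := by simp [Fin.ext_iff]
  have h10 : ¬((1:Fin (n+2)) = 0) := fun hh => h01 hh.symm
  have hss0 : ∀ k : Fin n, ¬(k.succ.succ = (0 : Fin (n+2))) := fun k => Fin.succ_ne_zero _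
  have hss1 : ∀ k : Fin n, ¬((k.succ.succ : Fin (n+2)) = 1) := fun k => by
    rw [← Fin.succ_zero_eq_one, Fin.succ_inj]; exact Fin.succ_ne_zero k
  ext i j
  rw [Matrix.mul_apply, Fin.sum_univ_succ, Fin.sum_univ_succ]
  rcases Fin.eq_zero_or_eq_succ j with rfl | ⟨j, rfl⟩ <;>
    [skip; rcases Fin.eq_zero_or_eq_succ j with rfl | ⟨j, rfl⟩] <;>
  rcases Fin.eq_zero_or_eq_succ i with rfl | ⟨i, rfl⟩ <;>
    [skip; rcases Fin.eq_zero_or_eq_succ i with rfl | ⟨i, rfl⟩; skip;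
     rcases Fin.eq_zero_or_eq_succ i with rfl | ⟨i, rfl⟩; skip;
     rcases Fin.eq_zero_or_eq_succ i with rfl | ⟨i, rfl⟩] <;>
  simp [Qmat, Rmat, Fin.succ_zero_eq_one, Fin.succ_ne_zero, h01, h10, hss0, hss1,
    Fin.succ_inj, Matrix.one_apply, mul_ite, ite_mul, Finset.sum_ite_eq',
    (Fin.succ_injective _).eq_iff] <;>
  try linarith [h]
  all_goals rfl

def Wmat {m : ℕ} (w : Fin (m+1) → ℤ) : Matrix (Fin (m+1)) (Fin (m+1)) ℤ :=
  Matrix.of fun i j => if j = 0 then w i else 0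

lemma Wmat_mul_self {m : ℕ} (w : Fin (m+1) → ℤ) (hw : w 0 = 0) :
    Wmat w * Wmat w = 0 := by
  ext i j
  rw [Matrix.mul_apply, Fin.sum_univ_succ]
  simp [Wmat, hw, Fin.succ_ne_zero]

lemma isUnit_one_add_Wmat {m : ℕ} (w : Fin (m+1) → ℤ) (hw : w 0 = 0) :
    IsUnit (1 + Wmat w).det := by
  have h : (1 + Wmat w) * (1 - Wmat w) = 1 := by
    have h2 : (1 + Wmat w) * (1 - Wmat w) = 1 - Wmat w * Wmat w := by noncomm_ring
    rw [h2, Wmat_mul_self w hw, sub_zero]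
  exact IsUnit.of_mul_eq_one _ (by rw [← Matrix.det_mul, h, Matrix.det_one])

lemma one_add_Wmat_mul {m : ℕ} (w : Fin (m+1) → ℤ) (N : Matrix (Fin (m+1)) (Fin (m+1)) ℤ)
    (i j : Fin (m+1)) : ((1 + Wmat w) * N) i j = N i j + w i * N 0 j := by
  rw [Matrix.add_mul, Matrix.one_mul, Matrix.add_apply, Matrix.mul_apply, Fin.sum_univ_succ]
  simp [Wmat, Fin.succ_ne_zero]

lemma mul_Qmat_col0 {n : ℕ} (M : Matrix (Fin (n+2)) (Fin (n+2)) ℤ) (u v p q : ℤ)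
    (i : Fin (n+2)) : (M * Qmat (n := n) u v p q : Matrix (Fin (n+2)) (Fin (n+2)) ℤ) i 0 = M i 0 * u + M i 1 * (-v) := by
  rw [Matrix.mul_apply, Fin.sum_univ_succ, Fin.sum_univ_succ]
  have h10 : ¬((1:Fin (n+2)) = 0) := by simp [Fin.ext_iff]
  have hss1 : ∀ k : Fin n, ¬((k.succ.succ : Fin (n+2)) = 1) := fun k => by
    rw [← Fin.succ_zero_eq_one, Fin.succ_inj]; exact Fin.succ_ne_zero k
  simp [Qmat, Fin.succ_zero_eq_one, Fin.succ_ne_zero, h10, hss1]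

lemma mul_Qmat_col1 {n : ℕ} (M : Matrix (Fin (n+2)) (Fin (n+2)) ℤ) (u v p q : ℤ)
    (i : Fin (n+2)) : (M * Qmat (n := n) u v p q : Matrix (Fin (n+2)) (Fin (n+2)) ℤ) i 1 = M i 0 * q + M i 1 * p := by
  rw [Matrix.mul_apply, Fin.sum_univ_succ, Fin.sum_univ_succ]
  have h01 : ¬((0:Fin (n+2)) = 1) := by simp [Fin.ext_iff]
  have hss1 : ∀ k : Fin n, ¬((k.succ.succ : Fin (n+2)) = 1) := fun k => by
    rw [← Fin.succ_zero_eq_one, Fin.succ_inj]; exact Fin.succ_ne_zero k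
  simp [Qmat, Fin.succ_zero_eq_one, Fin.succ_ne_zero, h01, hss1]

lemma mul_Qmat_colss {n : ℕ} (M : Matrix (Fin (n+2)) (Fin (n+2)) ℤ) (u v p q : ℤ)
    (i : Fin (n+2)) (j : Fin n) :
    (M * Qmat (n := n) u v p q : Matrix (Fin (n+2)) (Fin (n+2)) ℤ) i j.succ.succ = M i j.succ.succ := by
  rw [Matrix.mul_apply, Fin.sum_univ_succ, Fin.sum_univ_succ]
  have hz : ¬((0:Fin (n+2)) = j.succ.succ) := fun h => Fin.succ_ne_zero _ h.symm
  have h1 : ¬((1:Fin (n+2)) = j.succ.succ) := by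
    rw [← Fin.succ_zero_eq_one, Fin.succ_inj]
    exact fun h => Fin.succ_ne_zero j h.symm
  have hz' : ∀ k : Fin n, ¬(k.succ.succ = (0:Fin (n+2))) := fun k => Fin.succ_ne_zero _
  have h1' : ∀ k : Fin n, ¬((k.succ.succ:Fin (n+2)) = 1) := fun k => by
    rw [← Fin.succ_zero_eq_one, Fin.succ_inj]; exact Fin.succ_ne_zero k
  simp [Qmat, Fin.succ_zero_eq_one, hz, h1, hz', h1', Fin.succ_inj,
    mul_ite, Finset.sum_ite_eq']

lemma step {n : ℕ} (a c : Fin (n+2) → ℤ) (u v : ℤ) (huv : u * a 0 + v * a 1 = 1)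
    (a' c' : Fin (n+1) → ℤ)
    (ha' : a' = fun i => if i = 0 then a 0 * a 1 else a i.succ)
    (hc' : c' = fun i => if i = 0 then a 1 * c 0 + a 0 * c 1 else c i.succ) :
    Eqv (Mmat a c) (lift1 (Mmat a' c')) := by
  have hMe : ∀ i j : Fin (n+2), Mmat a c i j =
      if (i:ℕ) = n+1 then c j else if j = i then a i
      else if (j:ℕ) = (i:ℕ)+1 then -(a j) else 0 := fun i j => rfl
  have hMe' : ∀ i j : Fin (n+1), Mmat a' c' i j =
      if (i:ℕ) = n then c' j else if j = i then a' i
      else if (j:ℕ) = (i:ℕ)+1 then -(a' j) else 0 := fun i j => rfl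
  set Q : Matrix (Fin (n+2)) (Fin (n+2)) ℤ := Qmat u v (a 0) (a 1) with hQdef
  set N : Matrix (Fin (n+2)) (Fin (n+2)) ℤ := Mmat a c * Q with hNdef
  -- row zero of M
  have hM00 : Mmat a c 0 0 = a 0 := by
    rw [hMe]; rw [if_neg (by simp), if_pos rfl]
  have hM01 : Mmat a c 0 1 = -(a 1) := by
    rw [hMe]
    rw [if_neg (by simp), if_neg (by simp [Fin.ext_iff]), if_pos (by simp)]
  have hM0ss : ∀ j : Fin n, Mmat a c 0 j.succ.succ = 0 := by
    intro j
    rw [hMe]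
    rw [if_neg (by simp), if_neg (Fin.succ_ne_zero _), if_neg (by simp [Fin.val_succ])]
  -- row zero of N
  have hN00 : N 0 0 = 1 := by
    rw [hNdef, hQdef, mul_Qmat_col0, hM00, hM01]; linarith [huv]
  have hN01 : N 0 1 = 0 := by
    rw [hNdef, hQdef, mul_Qmat_col1, hM00, hM01]; ring
  have hN0 : ∀ j : Fin (n+2), N 0 j = if j = 0 then 1 else 0 := by
    intro j
    rcases Fin.eq_zero_or_eq_succ j with rfl | ⟨j, rfl⟩
    · rw [hN00, if_pos rfl]
    rcases Fin.eq_zero_or_eq_succ j with rfl | ⟨j, rfl⟩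
    · rw [Fin.succ_zero_eq_one, hN01, if_neg (by simp [Fin.ext_iff])]
    · rw [hNdef, hQdef, mul_Qmat_colss, hM0ss, if_neg (Fin.succ_ne_zero _)]
  -- the succ-succ block of N
  have hNs : ∀ (i j : Fin (n+1)), N i.succ j.succ = Mmat a' c' i j := by
    intro i j
    rcases Fin.eq_zero_or_eq_succ j with rfl | ⟨j, rfl⟩
    · -- column 1
      rw [show ((0:Fin (n+1)).succ : Fin (n+2)) = 1 from Fin.succ_zero_eq_one,
        hNdef, hQdef, mul_Qmat_col1, hMe']
      by_cases hl : (i:ℕ) = n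
      · have h1 : Mmat a c i.succ 0 = c 0 := by
          rw [hMe, if_pos (by simp [Fin.val_succ, hl])]
        have h2 : Mmat a c i.succ 1 = c 1 := by
          rw [hMe, if_pos (by simp [Fin.val_succ, hl])]
        rw [h1, h2, if_pos hl, hc']
        first | (simp; ring) | simp
      · rw [if_neg hl]
        rcases Fin.eq_zero_or_eq_succ i with rfl | ⟨i, rfl⟩
        · have hn0 : ¬((0:ℕ) = n) := by simpa using hl
          have h1 : Mmat a c (0:Fin (n+1)).succ 0 = 0 := by
            rw [hMe, Fin.succ_zero_eq_one]
            rw [if_neg (by simp [Fin.val_one]; omega), if_neg (by simp [Fin.ext_iff]),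
              if_neg (by simp [Fin.val_one])]
          have h2 : Mmat a c (0:Fin (n+1)).succ 1 = a 1 := by
            rw [hMe, Fin.succ_zero_eq_one]
            rw [if_neg (by simp [Fin.val_one]; omega), if_pos rfl]
          rw [h1, h2, if_pos rfl, ha']
          first | (simp; ring) | simp
        · have h1 : Mmat a c i.succ.succ 0 = 0 := by
            rw [hMe]
            rw [if_neg (by simp only [Fin.val_succ] at hl ⊢; omega),
              if_neg (fun h => Fin.succ_ne_zero _ h.symm),
              if_neg (by simp [Fin.val_succ])]
          have h2 : Mmat a c i.succ.succ 1 = 0 := by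
            rw [hMe]
            rw [if_neg (by simp only [Fin.val_succ] at hl ⊢; omega),
              if_neg (by rw [← Fin.succ_zero_eq_one, Fin.succ_inj]; exact fun h => Fin.succ_ne_zero _ h.symm),
              if_neg (by simp [Fin.val_one, Fin.val_succ])]
          rw [h1, h2, if_neg (fun h => Fin.succ_ne_zero _ h.symm),
            if_neg (by simp [Fin.val_succ])]
          ring
    · -- columns ≥ 2
      rw [hNdef, hQdef, mul_Qmat_colss, hMe, hMe']
      by_cases hl : (i:ℕ) = n
      · rw [if_pos (by simp [Fin.val_succ, hl]), if_pos hl, hc']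
        simp only [if_neg (Fin.succ_ne_zero j)]
      · rw [if_neg (by simp [Fin.val_succ]; omega), if_neg hl]
        by_cases he : j.succ = i
        · rw [if_pos (by rw [← he]), if_pos he, ha', ← he]
          simp only [if_neg (Fin.succ_ne_zero j)]
        · rw [if_neg (by rwa [Fin.succ_inj]), if_neg he]
          by_cases hv : ((j.succ : Fin (n+1)) : ℕ) = (i:ℕ) + 1
          · rw [if_pos (by simp only [Fin.val_succ] at hv ⊢; omega),
              if_pos hv, ha']
            simp only [if_neg (Fin.succ_ne_zero j)]
          · rw [if_neg (by simp only [Fin.val_succ] at hv ⊢; omega), if_neg hv]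
  -- clearing matrix
  set w : Fin (n+2) → ℤ := fun i => if i = 0 then 0 else -(N i 0) with hwdef
  have hw0 : w 0 = 0 := by rw [hwdef]; simp
  refine ⟨1 + Wmat w, Q, isUnit_one_add_Wmat w hw0, ?_, ?_⟩
  · exact IsUnit.of_mul_eq_one _
      (by rw [← Matrix.det_mul, hQdef, Qmat_mul_Rmat u v (a 0) (a 1) huv, Matrix.det_one])
  · rw [Matrix.mul_assoc, ← hNdef]
    ext i j
    rw [one_add_Wmat_mul]
    rcases Fin.eq_zero_or_eq_succ i with rfl | ⟨i, rfl⟩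
    · rw [hw0, zero_mul, add_zero, hN0]
      rcases Fin.eq_zero_or_eq_succ j with rfl | ⟨j, rfl⟩
      · simp
      · simp [Fin.succ_ne_zero]
    · have hwi : w i.succ = -(N i.succ 0) := by
        rw [hwdef]; simp [Fin.succ_ne_zero]
      rcases Fin.eq_zero_or_eq_succ j with rfl | ⟨j, rfl⟩
      · rw [hwi, hN00, mul_one, lift1_succ_zero]; ring
      · rw [hwi, hN0, if_neg (Fin.succ_ne_zero _), mul_zero, add_zero, hNs,
          lift1_succ_succ]

lemma key (n : ℕ) : ∀ (a c : Fin (n+1) → ℤ), (∀ i, 1 ≤ a i) → (∀ i, IsCoprime (a i) (c i)) →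
    (∀ i j, i ≠ j → IsCoprime (a i) (a j)) → Eqv (Mmat a c) (Dmat a c) := by
  induction n with
  | zero =>
    intro a c ha hac hpair
    refine ⟨Matrix.diagonal (fun _ => if 0 ≤ c 0 then 1 else -1), 1, ?_, ?_, ?_⟩
    · rw [Matrix.det_diagonal, Fin.prod_univ_one]
      split_ifs
      · exact isUnit_one
      · exact isUnit_one.neg
    · rw [Matrix.det_one]; exact isUnit_one
    · have hsum : ∑ l : Fin 1, c l * ∏ j ∈ Finset.univ.erase l, a j = c 0 := by
        rw [Fin.sum_univ_one, prod_erase_eq, Fin.prod_univ_one, if_pos rfl, mul_one]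
      ext i j
      have hi : i = 0 := Fin.fin_one_eq_zero i
      have hj : j = 0 := Fin.fin_one_eq_zero j
      subst hi hj
      rw [Matrix.mul_one, Matrix.diagonal_mul]
      have hm : Mmat a c 0 0 = c 0 := by simp [Mmat]
      rw [hm]
      have hd : Dmat a c 0 0 = |c 0| := by
        rw [Dmat, Matrix.diagonal_apply_eq, if_pos (by norm_num), hsum]
      rw [hd]
      split_ifs with h
      · rw [one_mul, abs_of_nonneg h]
      · rw [abs_of_neg (not_le.mp h)]; ring
  | succ n IH =>
    intro a c ha hac hpair
    have h01 : (0 : Fin (n+2)) ≠ 1 := by simp [Fin.ext_iff]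
    obtain ⟨u, v, huv⟩ := hpair 0 1 h01
    set a' : Fin (n+1) → ℤ := fun i => if i = 0 then a 0 * a 1 else a i.succ with ha'
    set c' : Fin (n+1) → ℤ := fun i => if i = 0 then a 1 * c 0 + a 0 * c 1 else c i.succ with hc'
    have hsne1 : ∀ j : Fin n, (1 : Fin (n+2)) ≠ j.succ.succ := fun j => by
      rw [← Fin.succ_zero_eq_one, Ne, Fin.succ_inj]
      exact fun h => Fin.succ_ne_zero _ h.symm
    have ha1 : ∀ i, 1 ≤ a' i := by
      intro i; rw [ha']; dsimp only; split_ifs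
      · nlinarith [ha 0, ha 1]
      · exact ha _
    have hac' : ∀ i, IsCoprime (a' i) (c' i) := by
      intro i; rw [ha', hc']; dsimp only; split_ifs with h
      · apply IsCoprime.mul_left
        · exact ((hpair 0 1 h01).mul_right (hac 0)).add_mul_left_right (c 1)
        · have h2 := (((hpair 0 1 h01).symm).mul_right (hac 1)).add_mul_left_right (c 0)
          rwa [add_comm (a 0 * c 1) (a 1 * c 0)] at h2
      · exact hac _
    have hpair' : ∀ i j, i ≠ j → IsCoprime (a' i) (a' j) := by
      intro i j hij; rw [ha']; dsimp only; split_ifs with h1 h2 h2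
      · exact absurd (h1.trans h2.symm) hij
      · refine IsCoprime.mul_left ?_ ?_
        · exact hpair 0 j.succ (fun h => Fin.succ_ne_zero _ h.symm)
        · refine hpair 1 j.succ (fun h => h2 ?_)
          rw [← Fin.succ_zero_eq_one, Fin.succ_inj] at h
          exact h.symm
      · refine IsCoprime.mul_right ?_ ?_
        · exact hpair i.succ 0 (Fin.succ_ne_zero _)
        · refine hpair i.succ 1 (fun h => h1 ?_)
          rw [← Fin.succ_zero_eq_one, Fin.succ_inj] at h
          exact h
      · exact hpair i.succ j.succ (fun h => hij (Fin.succ_injective _ h))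
    have hstep := step a c u v huv a' c' ha' hc'
    have hlift := (IH a' c' ha1 hac' hpair').lift1
    have hD : lift1 (Dmat a' c') = Dmat a c := by
      have hs := sum_id a c a' c' ha' hc'
      ext i j
      rcases Fin.eq_zero_or_eq_succ i with rfl | ⟨i, rfl⟩ <;>
        rcases Fin.eq_zero_or_eq_succ j with rfl | ⟨j, rfl⟩
      · rw [lift1_zero_zero, Dmat, Matrix.diagonal_apply_eq, if_neg (by simp)]
      · rw [lift1_zero_succ, Dmat,
          Matrix.diagonal_apply_ne _ (fun h => Fin.succ_ne_zero _ h.symm)]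
      · rw [lift1_succ_zero, Dmat, Matrix.diagonal_apply_ne _ (Fin.succ_ne_zero _)]
      · rw [lift1_succ_succ, Dmat, Dmat]
        by_cases hij : i = j
        · subst hij
          rw [Matrix.diagonal_apply_eq, Matrix.diagonal_apply_eq, hs]
          by_cases hcond : (i:ℕ) = n
          · rw [if_pos hcond, if_pos (by simp [Fin.val_succ, hcond])]
          · rw [if_neg hcond, if_neg (by simp only [Fin.val_succ]; omega)]
        · rw [Matrix.diagonal_apply_ne _ hij,
            Matrix.diagonal_apply_ne _ (fun h => hij (Fin.succ_injective _ h))]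
    exact hstep.trans (hD ▸ hlift)

theorem stmt_7 (t : ℕ) (ht : 1 ≤ t) (a c : Fin t → ℤ)
    (ha : ∀ i, 1 ≤ a i) (hac : ∀ i, IsCoprime (a i) (c i))
    (hpair : ∀ i j, i ≠ j → IsCoprime (a i) (a j))
    (M : Matrix (Fin t) (Fin t) ℤ)
    (hM : ∀ i j : Fin t, M i j =
      if (i : ℕ) = t - 1 then c j
      else if j = i then a i
      else if (j : ℕ) = (i : ℕ) + 1 then -(a j) else 0) :
    ∃ P Q : Matrix (Fin t) (Fin t) ℤ, IsUnit P.det ∧ IsUnit Q.det ∧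
      P * M * Q = Matrix.diagonal (fun i : Fin t =>
        if (i : ℕ) = t - 1 then |∑ l, c l * ∏ j ∈ Finset.univ.erase l, a j| else 1) := by
  obtain ⟨n, rfl⟩ : ∃ n, t = n + 1 := ⟨t - 1, by omega⟩
  have hMeq : M = Mmat a c := by
    ext i j
    rw [hM, Mmat]
    simp only [Matrix.of_apply, Nat.add_sub_cancel]
  have hkey := key n a c ha hac hpair
  rw [← hMeq] at hkey
  obtain ⟨P, Q, hP, hQ, hPQ⟩ := hkey
  refine ⟨P, Q, hP, hQ, ?_⟩
  rw [hPQ, Dmat]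
  simp only [Nat.add_sub_cancel]
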